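/- arXiv:1408.4217 — 3 statements merged into one kernel-verified Lean document; each statement's English description precedes it below -/
import Mathlib

section
/- Let G be a quasi-semi-simple group acting by isometries on a metric space X, with jointly continuous action map G × X → X. Suppose that every normal subgroup of G that has a global fixed point in X has compact closure in G. Then every G-orbit is closed in X and every point stabilizer is compact in G. -/
open Filter Topology

/-- A bundled nonempty directed index type (a "directed set"). -/
structure DirIndex : Type 1 where
  ι : Type
  [pre : Preorder ι]
  [ne : Nonempty ι]
  [dir : IsDirected ι (· ≤ ·)]

attribute [instance] DirIndex.pre DirIndex.ne DirIndex.dir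

/-- A net in `X`: a map from a nonempty directed preorder to `X`. -/
structure DirNet (X : Type*) where
  idx : DirIndex
  toFun : idx.ι → X

/-- `m` is a subnet of `n`: it is obtained by precomposing `n` with a
monotone cofinal map of directed sets. -/
def DirNet.IsSubnet {X : Type*} (m n : DirNet X) : Prop :=
  ∃ f : m.idx.ι → n.idx.ι, Monotone f ∧ (∀ d, ∃ e, d ≤ f e) ∧ m.toFun = n.toFun ∘ f

/-- Convergence of a net to a point. -/
def DirNet.TendstoNhds {X : Type*} [TopologicalSpace X] (n : DirNet X) (x : X) : Prop :=
  Filter.Tendsto n.toFun Filter.atTop (nhds x)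

/-- The net obtained from `n` by post-composition with `f`. -/
def DirNet.map {X Y : Type*} (n : DirNet X) (f : X → Y) : DirNet Y :=
  ⟨n.idx, f ∘ n.toFun⟩

/-- A net admits a convergent subnet. -/
def DirNet.HasConvergentSubnet {X : Type*} [TopologicalSpace X] (n : DirNet X) : Prop :=
  ∃ m : DirNet X, m.IsSubnet n ∧ ∃ x, m.TendstoNhds x

/-- `U₊`: the group of elements contracted by conjugation along the net `a`. -/
def UPlus {G : Type*} [Group G] [TopologicalSpace G] (a : DirNet G) : Set G :=
  {x | Filter.Tendsto (fun i => (a.toFun i)⁻¹ * x * a.toFun i) Filter.atTop (nhds 1)}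

/-- `U₋`: the group of elements contracted by the inverse conjugation along the net `a`. -/
def UMinus {G : Type*} [Group G] [TopologicalSpace G] (a : DirNet G) : Set G :=
  {x | Filter.Tendsto (fun i => a.toFun i * x * (a.toFun i)⁻¹) Filter.atTop (nhds 1)}

/-- `U₀`: the elements `x` such that every subnet of both conjugation nets admits a
convergent subnet. -/
def UZero {G : Type*} [Group G] [TopologicalSpace G] (a : DirNet G) : Set G :=
  {x | (∀ p : DirNet G, p.IsSubnet (a.map fun g => g⁻¹ * x * g) → p.HasConvergentSubnet) ∧
       (∀ p : DirNet G, p.IsSubnet (a.map fun g => g * x * g⁻¹) → p.HasConvergentSubnet)}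

/-- A (locally compact Hausdorff) topological group is quasi-semi-simple (qss) if it has
a closed subgroup `A` with `G = C·A·C` for some compact `C`, and every net in `A` going to
infinity has a subnet whose `U₊` has non-compact closure and such that `U₊ ∪ U₋ ∪ U₀`
generates a dense subgroup. -/
def IsQSS (G : Type*) [Group G] [TopologicalSpace G] : Prop :=
  ∃ A : Subgroup G, IsClosed (A : Set G) ∧
    (∃ C : Set G, IsCompact C ∧ ∀ g : G, ∃ c ∈ C, ∃ a ∈ A, ∃ c' ∈ C, g = c * a * c') ∧
    ∀ n : DirNet G, (∀ i, n.toFun i ∈ A) →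
      Filter.Tendsto n.toFun Filter.atTop (Filter.cocompact G) →
      ∃ m : DirNet G, m.IsSubnet n ∧
        ¬ IsCompact (closure (UPlus m)) ∧
        Dense ((Subgroup.closure (UPlus m ∪ UMinus m ∪ UZero m) : Subgroup G) : Set G)

/-- A topology `T` is compatible with the uniform structure `U`. -/
def SCompatible {X : Type*} (U : UniformSpace X) (T : TopologicalSpace X) : Prop :=
  ∀ V : Set X, IsOpen[T] V → ∀ y ∈ V, ∃ V' : Set X, IsOpen[T] V' ∧ y ∈ V' ∧
    ∃ W ∈ @uniformity X U, {v | ∃ v' ∈ V', (v, v') ∈ W} ⊆ V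

/-- The action of `G` on the uniform space `(X, U)` is equicontinuous. -/
def EquicontinuousSMul (G : Type*) {X : Type*} [SMul G X] (U : UniformSpace X) : Prop :=
  ∀ W ∈ @uniformity X U, {p : X × X | ∀ g : G, (g • p.1, g • p.2) ∈ W} ∈ @uniformity X U

/-- Joint continuity of the action map with respect to given topologies. -/
def JointlyContinuousSMul (G : Type*) {X : Type*} [SMul G X] (tG : TopologicalSpace G)
    (tX : TopologicalSpace X) : Prop :=
  @Continuous (G × X) X (@instTopologicalSpaceProd G X tG tX) tX fun p => p.1 • p.2

/-- A map is universally closed: its product with any identity map is closed. -/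
def UniversallyClosedMap {X Y : Type*} (tX : TopologicalSpace X) (tY : TopologicalSpace Y)
    (f : X → Y) : Prop :=
  ∀ (Z : Type) (tZ : TopologicalSpace Z),
    @IsClosedMap (X × Z) (Y × Z) (@instTopologicalSpaceProd X Z tX tZ)
      (@instTopologicalSpaceProd Y Z tY tZ) (Prod.map f id)

set_option maxHeartbeats 1000000
section S5AuxSection

namespace S5Aux

open Pointwise

/-- Membership in `atTop` of a nonempty directed preorder is given by tails. -/
lemma mem_atTop_iff_dir {ι : Type*} [Preorder ι] [Nonempty ι] [IsDirected ι (· ≤ ·)]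
    {s : Set ι} : s ∈ (atTop : Filter ι) ↔ ∃ a, ∀ b, a ≤ b → b ∈ s := by
  have hdir : Directed (fun x1 x2 : Filter ι => x1 ≥ x2) (fun a : ι => 𝓟 (Set.Ici a)) := by
    intro a b
    obtain ⟨c, hac, hbc⟩ := exists_ge_ge a b
    refine ⟨c, ?_, ?_⟩ <;> simp only [ge_iff_le, Filter.principal_mono] <;>
      intro x hx <;> [exact le_trans hac hx; exact le_trans hbc hx]
  rw [Filter.atTop, Filter.mem_iInf_of_directed hdir]
  simp only [Filter.mem_principal, Set.subset_def, Set.mem_Ici]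

lemma atTop_neBot_dir {ι : Type*} [Preorder ι] [Nonempty ι] [IsDirected ι (· ≤ ·)] :
    (atTop : Filter ι).NeBot :=
  Filter.atTop_neBot_iff.mpr ⟨‹_›, ‹_›⟩

/-- The eventuality filter of a subnet is finer than that of the net. -/
lemma subnet_map_atTop_le {X : Type*} {m n : DirNet X} (h : m.IsSubnet n) :
    Filter.map m.toFun Filter.atTop ≤ Filter.map n.toFun Filter.atTop := by
  obtain ⟨f, hmono, hcof, heq⟩ := h
  intro t ht
  rw [Filter.mem_map] at ht ⊢
  rw [mem_atTop_iff_dir] at ht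
  obtain ⟨d₀, hd₀⟩ := ht
  obtain ⟨e₀, he₀⟩ := hcof d₀
  rw [mem_atTop_iff_dir]
  refine ⟨e₀, fun e he => ?_⟩
  have : d₀ ≤ f e := le_trans he₀ (hmono he)
  have := hd₀ (f e) this
  simpa [heq] using this

/-- Canonical directed index associated to a filter `V` on a preorder. -/
structure CanonIdx {iota : Type} [Preorder iota] (V : Filter iota) : Type where
  pt : iota
  carrier : Set iota
  mem : pt ∈ carrier
  memV : carrier ∈ V

instance {iota : Type} [Preorder iota] (V : Filter iota) : Preorder (CanonIdx V) where
  le a b := a.pt ≤ b.pt ∧ b.carrier ⊆ a.carrier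
  lt a b := (a.pt ≤ b.pt ∧ b.carrier ⊆ a.carrier) ∧ ¬(b.pt ≤ a.pt ∧ a.carrier ⊆ b.carrier)
  lt_iff_le_not_ge _ _ := Iff.rfl
  le_refl a := ⟨le_refl _, subset_rfl⟩
  le_trans a b c hab hbc := ⟨le_trans hab.1 hbc.1, subset_trans hbc.2 hab.2⟩

lemma canonIdx_nonempty {iota : Type} [Preorder iota] (V : Filter iota) [V.NeBot] :
    Nonempty (CanonIdx V) := by
  obtain ⟨x, hx⟩ := Filter.nonempty_of_mem (Filter.univ_mem (f := V))
  exact ⟨⟨x, Set.univ, hx, Filter.univ_mem⟩⟩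

lemma canonIdx_directed {iota : Type} [Preorder iota] (V : Filter iota) [V.NeBot]
    (htail : ∀ i : iota, {b | i ≤ b} ∈ V) : IsDirected (CanonIdx V) (· ≤ ·) := by
  constructor
  rintro ⟨i, S, hiS, hSV⟩ ⟨j, T, hjT, hTV⟩
  have hmem : S ∩ T ∩ ({b | i ≤ b} ∩ {b | j ≤ b}) ∈ V :=
    Filter.inter_mem (Filter.inter_mem hSV hTV) (Filter.inter_mem (htail i) (htail j))
  obtain ⟨l, hl⟩ := Filter.nonempty_of_mem hmem
  have hsub1 : S ∩ T ∩ ({b | i ≤ b} ∩ {b | j ≤ b}) ⊆ S := fun x hx => hx.1.1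
  have hsub2 : S ∩ T ∩ ({b | i ≤ b} ∩ {b | j ≤ b}) ⊆ T := fun x hx => hx.1.2
  exact ⟨⟨l, _, hl, hmem⟩, ⟨hl.2.1, hsub1⟩, ⟨hl.2.2, hsub2⟩⟩

/-- Key lemma: if every subnet of a net has a convergent subnet, then the pushforward of
any ultrafilter finer than `atTop` converges. -/
lemma ultrafilter_tendsto_of_subnets {Y : Type*} [TopologicalSpace Y] (m : DirNet Y)
    (hsub : ∀ p : DirNet Y, p.IsSubnet m → p.HasConvergentSubnet)
    (V : Ultrafilter m.idx.ι) (hV : (V : Filter m.idx.ι) ≤ atTop) :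
    ∃ l, Tendsto m.toFun (V : Filter m.idx.ι) (𝓝 l) := by
  classical
  have htail : ∀ i : m.idx.ι, {b | i ≤ b} ∈ (V : Filter m.idx.ι) :=
    fun i => hV (Filter.mem_atTop i)
  haveI hne : Nonempty (CanonIdx (V : Filter m.idx.ι)) := canonIdx_nonempty _
  haveI hdir : IsDirected (CanonIdx (V : Filter m.idx.ι)) (· ≤ ·) := canonIdx_directed _ htail
  let idxσ : DirIndex := @DirIndex.mk (CanonIdx (V : Filter m.idx.ι)) _ hne hdir
  let q : DirNet Y := ⟨idxσ, fun p => m.toFun p.pt⟩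
  have hq : q.IsSubnet m := by
    refine ⟨fun p => p.pt, fun a b hab => hab.1, fun d => ?_, rfl⟩
    obtain ⟨l, hl⟩ := Filter.nonempty_of_mem (htail d)
    exact ⟨⟨l, {b | d ≤ b}, hl, htail d⟩, hl⟩
  obtain ⟨r, hr, l, hl⟩ := hsub q hq
  refine ⟨l, ?_⟩
  have hW : ((V.map m.toFun : Ultrafilter Y) : Filter Y) ≤ 𝓝 l := by
    apply Ultrafilter.le_of_inf_neBot
    rw [Filter.inf_neBot_iff]
    intro E hE N hN
    have hSE : m.toFun ⁻¹' E ∈ V := by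
      rwa [Ultrafilter.mem_coe, Ultrafilter.mem_map] at hE
    obtain ⟨f₂, hmono₂, hcof₂, heq₂⟩ := hr
    have hNr : r.toFun ⁻¹' N ∈ (atTop : Filter r.idx.ι) := hl (by exact hN)
    rw [mem_atTop_iff_dir] at hNr
    obtain ⟨e₀, he₀⟩ := hNr
    obtain ⟨i₀, hi₀⟩ := Filter.nonempty_of_mem hSE
    obtain ⟨e₁, he₁⟩ := hcof₂ ⟨i₀, m.toFun ⁻¹' E, hi₀, hSE⟩
    obtain ⟨e₂, he₂0, he₂1⟩ := exists_ge_ge e₀ e₁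
    have hge : (⟨i₀, m.toFun ⁻¹' E, hi₀, hSE⟩ : CanonIdx (V : Filter m.idx.ι)) ≤ f₂ e₂ :=
      le_trans he₁ (hmono₂ he₂1)
    have hmemE : r.toFun e₂ ∈ E := by
      have h1 : (f₂ e₂).pt ∈ m.toFun ⁻¹' E := hge.2 (f₂ e₂).mem
      have hre : r.toFun e₂ = m.toFun (f₂ e₂).pt := by rw [heq₂]; rfl
      rwa [hre]
    exact ⟨r.toFun e₂, hmemE, he₀ e₂ he₂0⟩
  intro s hs
  exact hW hs

/-- From a closed non-compact subset of a locally compact group, extract a sequence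
tending to infinity. -/
lemma exists_seq_tendsto_cocompact {G : Type*} [Group G] [TopologicalSpace G]
    [IsTopologicalGroup G] [LocallyCompactSpace G] {S : Set G}
    (hcl : IsClosed S) (hnc : ¬ IsCompact S) :
    ∃ g : ℕ → G, (∀ n, g n ∈ S) ∧ Tendsto g atTop (cocompact G) := by
  classical
  obtain ⟨K₀, hK₀c, hK₀n⟩ := exists_compact_mem_nhds (1 : G)
  set Q : Set G := K₀⁻¹ * K₀ with hQdef
  have hQc : IsCompact Q := hK₀c.inv.mul hK₀c
  -- finite unions of translates of Q indexed by a list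
  let B : List G → Set G := fun l => l.foldr (fun z s => (fun w => z * w) '' Q ∪ s) ∅
  have hBc : ∀ l, IsCompact (B l) := by
    intro l
    induction l with
    | nil => exact isCompact_empty
    | cons z l ih =>
      exact (hQc.image (continuous_mul_left z)).union ih
  have hBmem : ∀ (l : List G) (z : G), z ∈ l → (fun w => z * w) '' Q ⊆ B l := by
    intro l
    induction l with
    | nil => intro z hz; cases hz
    | cons a l ih =>
      intro z hz
      rcases List.mem_cons.mp hz with h | h
      · subst h; exact Set.subset_union_left
      · exact (ih z h).trans Set.subset_union_right
  -- the choice of the next element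
  have hnext : ∀ l : List G, (S \ B l).Nonempty := by
    intro l
    by_contra h
    rw [Set.not_nonempty_iff_eq_empty, Set.diff_eq_empty] at h
    exact hnc (IsCompact.of_isClosed_subset (hBc l) hcl h)
  let next : List G → G := fun l => (hnext l).some
  let Lrec : ℕ → List G := fun n => Nat.rec [] (fun _ l => l ++ [next l]) n
  let g : ℕ → G := fun n => next (Lrec n)
  have hgS : ∀ n, g n ∈ S := fun n => ((hnext (Lrec n)).some_mem).1
  have hgB : ∀ n, g n ∉ B (Lrec n) := fun n => ((hnext (Lrec n)).some_mem).2
  have hLmem : ∀ m n, m < n → g m ∈ Lrec n := by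
    intro m n hmn
    induction n with
    | zero => omega
    | succ n ih =>
      have : Lrec (n+1) = Lrec n ++ [g n] := rfl
      rw [this, List.mem_append]
      rcases Nat.lt_succ_iff_lt_or_eq.mp hmn with h | h
      · exact Or.inl (ih h)
      · subst h; exact Or.inr (List.mem_singleton.mpr rfl)
  -- separation
  have hsep : ∀ m n, m < n → g n ∉ (fun w => g m * w) '' Q := by
    intro m n hmn hmem
    exact hgB n (hBmem (Lrec n) (g m) (hLmem m n hmn) hmem)
  refine ⟨g, hgS, ?_⟩
  rw [Filter.tendsto_def]
  intro s hs
  rw [Filter.mem_cocompact] at hs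
  obtain ⟨K, hKc, hKs⟩ := hs
  -- eventually not in K
  have hev : ∀ᶠ n in atTop, g n ∉ K := by
    by_contra h
    rw [Filter.not_eventually] at h
    have hinf : {n | g n ∈ K}.Infinite := by
      have := Nat.frequently_atTop_iff_infinite.mp (h.mono (fun n hn => not_not.mp hn))
      exact this
    obtain ⟨n₀, hn₀⟩ := hinf.nonempty
    haveI : Nonempty K := ⟨⟨g n₀, hn₀⟩⟩
    -- cover K by finitely many translates of interior K₀
    have h1 : (1 : G) ∈ interior K₀ := mem_interior_iff_mem_nhds.mpr hK₀n
    have hcover : K ⊆ ⋃ x : K, (fun w => (x : G)⁻¹ * w) ⁻¹' interior K₀ := by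
      intro z hz
      refine Set.mem_iUnion.mpr ⟨⟨z, hz⟩, ?_⟩
      simp [h1]
    obtain ⟨t, ht⟩ := hKc.elim_finite_subcover
      (fun x : K => (fun w => (x : G)⁻¹ * w) ⁻¹' interior K₀)
      (fun x => (isOpen_interior).preimage (continuous_mul_left _)) hcover
    -- map each n with g n ∈ K to some covering index
    have hmap : Set.MapsTo (fun n => if hn : g n ∈ K then
        (Set.mem_iUnion₂.mp (ht hn)).choose else Classical.arbitrary _)
        {n | g n ∈ K} (t : Set K) := by
      intro n hn
      simp only [Set.mem_setOf_eq] at hn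
      simp only [hn, dif_pos]
      have := (Set.mem_iUnion₂.mp (ht hn)).choose_spec
      exact this.1
    obtain ⟨m, hm, n, hn, hmn, heqi⟩ :=
      hinf.exists_ne_map_eq_of_mapsTo hmap (t.finite_toSet)
    -- both g m and g n lie in the same translate of interior K₀
    simp only [Set.mem_setOf_eq] at hm hn
    set x := (Set.mem_iUnion₂.mp (ht hm)).choose with hxdef
    have hxm : g m ∈ (fun w => (x : G)⁻¹ * w) ⁻¹' interior K₀ :=
      (Set.mem_iUnion₂.mp (ht hm)).choose_spec.2
    have hxn : g n ∈ (fun w => (x : G)⁻¹ * w) ⁻¹' interior K₀ := by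
      have h2 := (Set.mem_iUnion₂.mp (ht hn)).choose_spec.2
      have : (Set.mem_iUnion₂.mp (ht hn)).choose = x := by
        rw [hxdef]
        simp only [hm, dif_pos, hn] at heqi
        exact heqi.symm
      rwa [this] at h2
    have key : ∀ a b : ℕ, g a ∈ (fun w => (x : G)⁻¹ * w) ⁻¹' interior K₀ →
        g b ∈ (fun w => (x : G)⁻¹ * w) ⁻¹' interior K₀ → g b ∈ (fun w => g a * w) '' Q := by
      intro a b ha hb
      refine ⟨((x : G)⁻¹ * g a)⁻¹ * ((x : G)⁻¹ * g b), ?_, by group⟩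
      exact Set.mul_mem_mul (Set.inv_mem_inv.mpr (interior_subset ha)) (interior_subset hb)
    rcases lt_or_gt_of_ne hmn with h | h
    · exact hsep m n h (key m n hxm hxn)
    · exact hsep n m h (key n m hxn hxm)
  exact Filter.mem_of_superset (hev.mono (fun n hn => hKs hn)) (fun _ h => h)

/-- The central proposition: given the qss data, there is no sequence `α` in `A` going to
infinity that maps points `p n` converging to `x'` to points `q n` converging to `y'`. -/
theorem propP {G X : Type*} [Group G] [TopologicalSpace G] [IsTopologicalGroup G]
    [T2Space G] [MetricSpace X] [MulAction G X]
    (hiso : ∀ (g : G) (x y : X), dist (g • x) (g • y) = dist x y)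
    (hcont : Continuous fun p : G × X => p.1 • p.2)
    (hfix : ∀ N : Subgroup G, N.Normal → (∃ x : X, ∀ g ∈ N, g • x = x) →
      IsCompact (closure (N : Set G)))
    (A : Subgroup G)
    (hqssA : ∀ n : DirNet G, (∀ i, n.toFun i ∈ A) →
      Tendsto n.toFun atTop (cocompact G) →
      ∃ m : DirNet G, m.IsSubnet n ∧ ¬ IsCompact (closure (UPlus m)) ∧
        Dense ((Subgroup.closure (UPlus m ∪ UMinus m ∪ UZero m) : Subgroup G) : Set G))
    (α : ℕ → G) (hαA : ∀ n, α n ∈ A) (hesc : Tendsto α atTop (cocompact G))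
    (x' y' : X) (p q : ℕ → X) (hpq : ∀ n, α n • p n = q n)
    (hp : Tendsto p atTop (𝓝 x')) (hq : Tendsto q atTop (𝓝 y')) : False := by
  classical
  have hsx : Continuous fun g : G => g • x' :=
    hcont.comp (continuous_id.prodMk continuous_const)
  set β : ℕ × ℕ → G := fun mn => (α mn.1)⁻¹ * α mn.2 with hβ
  set W : Filter (ℕ × ℕ) := (atTop : Filter ℕ).bind (fun m => Filter.map (Prod.mk m) atTop)
    with hWdef
  have hmemW : ∀ s : Set (ℕ × ℕ), s ∈ W ↔ ∀ᶠ m in atTop, ∀ᶠ n in atTop, (m, n) ∈ s := by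
    intro s
    rw [hWdef, Filter.mem_bind]
    constructor
    · rintro ⟨t, ht, h⟩
      refine Filter.mem_of_superset ht (fun m hm => ?_)
      have h2 := h m hm
      rwa [Filter.mem_map] at h2
    · intro h
      refine ⟨{m | ∀ᶠ n in atTop, (m, n) ∈ s}, h, fun m hm => ?_⟩
      rwa [Filter.mem_map]
  have hWne : W.NeBot := by
    rw [← Filter.forall_mem_nonempty_iff_neBot]
    intro s hs
    rw [hmemW] at hs
    obtain ⟨m, hm⟩ := hs.exists
    obtain ⟨n, hn⟩ := hm.exists
    exact ⟨(m, n), hn⟩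
  have hβA : ∀ z : ℕ × ℕ, β z ∈ A := fun z => A.mul_mem (A.inv_mem (hαA z.1)) (hαA z.2)
  have hαesc : ∀ K : Set G, IsCompact K → ∀ᶠ n in atTop, α n ∉ K := by
    intro K hK
    exact hesc (Filter.mem_cocompact.mpr ⟨K, hK, subset_rfl⟩)
  have hβesc : Tendsto β W (cocompact G) := by
    rw [Filter.tendsto_def]
    intro s hs
    rw [Filter.mem_cocompact] at hs
    obtain ⟨K, hKc, hKs⟩ := hs
    rw [hmemW]
    refine Filter.Eventually.of_forall (fun m => ?_)
    have hKm : IsCompact ((fun w => α m * w) '' K) := hKc.image (continuous_mul_left _)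
    refine (hαesc _ hKm).mono (fun n hn => ?_)
    apply hKs
    intro hmem
    exact hn ⟨β (m, n), hmem, by simp [hβ]⟩
  -- distance estimates
  have hinvsmul : ∀ (g : G) (a c : X), dist (g⁻¹ • a) c = dist a (g • c) := by
    intro g a c
    rw [← hiso g (g⁻¹ • a) c, smul_inv_smul]
  have keyest : ∀ m n : ℕ, dist (β (m, n) • x') x' ≤
      dist (p m) x' + dist (q m) y' + (dist (p n) x' + dist (q n) y') := by
    intro m n
    have h1 : β (m, n) • x' = (α m)⁻¹ • ((α n) • x') := by
      rw [hβ, mul_smul]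
    rw [h1, hinvsmul]
    have h4 : dist ((α n) • x') ((α m) • x') ≤
        dist ((α n) • x') (q n) + dist (q n) (q m) + dist (q m) ((α m) • x') :=
      dist_triangle4 _ _ _ _
    have e1 : dist ((α n) • x') (q n) = dist x' (p n) := by rw [← hpq n, hiso]
    have e2 : dist (q m) ((α m) • x') = dist (p m) x' := by
      rw [← hpq m, dist_comm, hiso, dist_comm]
    have e3 : dist (q n) (q m) ≤ dist (q n) y' + dist (q m) y' := dist_triangle_right _ _ _
    rw [e1, e2] at h4
    rw [dist_comm x' (p n)] at h4
    linarith
  have hβx : Tendsto (fun z => β z • x') W (𝓝 x') := by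
    rw [Metric.tendsto_nhds]
    intro ε hε
    have hppt : ∀ᶠ m in atTop, dist (p m) x' < ε/4 ∧ dist (q m) y' < ε/4 :=
      (Metric.tendsto_nhds.mp hp (ε/4) (by linarith)).and
        (Metric.tendsto_nhds.mp hq (ε/4) (by linarith))
    have : {z : ℕ × ℕ | dist (β z • x') x' < ε} ∈ W := by
      rw [hmemW]
      refine hppt.mono (fun m hm => hppt.mono (fun n hn => ?_))
      have hk := keyest m n
      simp only [Set.mem_setOf_eq]
      linarith [hm.1, hm.2, hn.1, hn.2]
    exact this
  have hβxinv : Tendsto (fun z => (β z)⁻¹ • x') W (𝓝 x') := by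
    rw [Metric.tendsto_nhds]
    intro ε hε
    have hppt : ∀ᶠ m in atTop, dist (p m) x' < ε/4 ∧ dist (q m) y' < ε/4 :=
      (Metric.tendsto_nhds.mp hp (ε/4) (by linarith)).and
        (Metric.tendsto_nhds.mp hq (ε/4) (by linarith))
    have : {z : ℕ × ℕ | dist ((β z)⁻¹ • x') x' < ε} ∈ W := by
      rw [hmemW]
      refine hppt.mono (fun m hm => hppt.mono (fun n hn => ?_))
      have hinv : (β (m, n))⁻¹ = β (n, m) := by
        rw [hβ]; simp [mul_inv_rev]
      have hk := keyest n m
      simp only [Set.mem_setOf_eq, hinv]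
      linarith [hm.1, hm.2, hn.1, hn.2]
    exact this
  -- the input net
  have htailW : ∀ z : ℕ × ℕ, {w | z ≤ w} ∈ W := by
    intro z
    rw [hmemW]
    filter_upwards [Filter.eventually_ge_atTop z.1] with m hm
    filter_upwards [Filter.eventually_ge_atTop z.2] with n hn
    exact ⟨hm, hn⟩
  haveI := hWne
  haveI hneJ : Nonempty (CanonIdx W) := canonIdx_nonempty _
  haveI hdirJ : IsDirected (CanonIdx W) (· ≤ ·) := canonIdx_directed _ htailW
  let idxJ : DirIndex := @DirIndex.mk (CanonIdx W) _ hneJ hdirJ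
  let nNet : DirNet G := ⟨idxJ, fun e => β e.pt⟩
  have hnNetA : ∀ i, nNet.toFun i ∈ A := fun i => hβA _
  have hnNet_le : Filter.map nNet.toFun atTop ≤ Filter.map β W := by
    intro t ht
    rw [Filter.mem_map] at ht ⊢
    rw [mem_atTop_iff_dir]
    obtain ⟨z₀, hz₀⟩ := Filter.nonempty_of_mem ht
    exact ⟨⟨z₀, β ⁻¹' t, hz₀, ht⟩, fun e he => he.2 e.mem⟩
  have hnNetesc : Tendsto nNet.toFun atTop (cocompact G) := le_trans hnNet_le hβesc
  obtain ⟨m, hsub, hnc, hdense⟩ := hqssA nNet hnNetA hnNetesc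
  haveI : Nonempty m.idx.ι := m.idx.ne
  haveI : (atTop : Filter m.idx.ι).NeBot := atTop_neBot_dir
  obtain ⟨V, hV⟩ := Filter.exists_ultrafilter_le (atTop : Filter m.idx.ι)
  set b : m.idx.ι → G := m.toFun with hb
  have hm_le : Filter.map b atTop ≤ Filter.map β W :=
    le_trans (subnet_map_atTop_le hsub) hnNet_le
  have transfer : ∀ (φ : G → X) (l : Filter X),
      Tendsto (φ ∘ β) W l → Tendsto (φ ∘ b) (V : Filter m.idx.ι) l := by
    intro φ l h
    calc Filter.map (φ ∘ b) (V : Filter _)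
        ≤ Filter.map (φ ∘ b) atTop := Filter.map_mono hV
      _ = Filter.map φ (Filter.map b atTop) := (Filter.map_map).symm
      _ ≤ Filter.map φ (Filter.map β W) := Filter.map_mono hm_le
      _ = Filter.map (φ ∘ β) W := Filter.map_map
      _ ≤ l := h
  have hbx : Tendsto (fun i => b i • x') (V : Filter m.idx.ι) (𝓝 x') := by
    have h := transfer (fun g : G => g • x') (𝓝 x')
      (show Tendsto ((fun g : G => g • x') ∘ β) W (𝓝 x') from hβx)
    exact h
  have hbinvx : Tendsto (fun i => (b i)⁻¹ • x') (V : Filter m.idx.ι) (𝓝 x') := by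
    have h := transfer (fun g : G => g⁻¹ • x') (𝓝 x')
      (show Tendsto ((fun g : G => g⁻¹ • x') ∘ β) W (𝓝 x') from hβxinv)
    exact h
  -- the ultrafilter contraction groups
  let Vplus : Subgroup G :=
    { carrier := {v | Tendsto (fun i => (b i)⁻¹ * v * b i) (V : Filter m.idx.ι) (𝓝 1)}
      one_mem' := by
        have : Tendsto (fun _ : m.idx.ι => (1 : G)) (V : Filter m.idx.ι) (𝓝 1) :=
          tendsto_const_nhds
        exact this.congr (fun i => by group)
      mul_mem' := by
        intro v w hv hw
        have h3 := hv.mul hw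
        rw [mul_one] at h3
        exact h3.congr (fun i => by group)
      inv_mem' := by
        intro v hv
        have h3 := hv.inv
        rw [inv_one] at h3
        exact h3.congr (fun i => by group) }
  let Vminus : Subgroup G :=
    { carrier := {v | Tendsto (fun i => b i * v * (b i)⁻¹) (V : Filter m.idx.ι) (𝓝 1)}
      one_mem' := by
        have : Tendsto (fun _ : m.idx.ι => (1 : G)) (V : Filter m.idx.ι) (𝓝 1) :=
          tendsto_const_nhds
        exact this.congr (fun i => by group)
      mul_mem' := by
        intro v w hv hw
        have h3 := hv.mul hw
        rw [mul_one] at h3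
        exact h3.congr (fun i => by group)
      inv_mem' := by
        intro v hv
        have h3 := hv.inv
        rw [inv_one] at h3
        exact h3.congr (fun i => by group) }
  -- fixing x'
  have hfixgen : ∀ c : m.idx.ι → G,
      Tendsto (fun i => c i • x') (V : Filter m.idx.ι) (𝓝 x') →
      ∀ v : G, Tendsto (fun i => (c i)⁻¹ * v * c i) (V : Filter m.idx.ι) (𝓝 1) →
      v • x' = x' := by
    intro c hc v hv
    by_contra hne
    have hd : 0 < dist (v • x') x' := dist_pos.mpr hne
    have h2 : Tendsto (fun i => ((c i)⁻¹ * v * c i) • x') (V : Filter m.idx.ι) (𝓝 x') := by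
      have h3 := (hsx.tendsto 1).comp hv
      rwa [one_smul] at h3
    have e1 := Metric.tendsto_nhds.mp hc (dist (v • x') x' / 3) (by linarith)
    have e2 := Metric.tendsto_nhds.mp h2 (dist (v • x') x' / 3) (by linarith)
    obtain ⟨i, hi1, hi2⟩ := (e1.and e2).exists
    have t1 : dist (v • x') (v • (c i • x')) = dist x' (c i • x') := hiso v _ _
    have t2 : v • (c i • x') = c i • (((c i)⁻¹ * v * c i) • x') := by
      rw [smul_smul, smul_smul]
      congr 1
      group
    have t3 : dist (v • (c i • x')) (c i • x') = dist (((c i)⁻¹ * v * c i) • x') x' := by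
      rw [t2, hiso]
    have key : dist (v • x') x' ≤
        dist (v • x') (v • (c i • x')) + dist (v • (c i • x')) (c i • x') + dist (c i • x') x' :=
      dist_triangle4 _ _ _ _
    rw [t1, t3, dist_comm x' (c i • x')] at key
    linarith
  have hVplus_fix : ∀ v ∈ Vplus, v • x' = x' := fun v hv => hfixgen b hbx v hv
  have hVminus_fix : ∀ v ∈ Vminus, v • x' = x' := by
    intro v hv
    refine hfixgen (fun i => (b i)⁻¹) hbinvx v ?_
    exact (hv : Tendsto (fun i => b i * v * (b i)⁻¹) _ _).congr (fun i => by group)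
  -- inclusion of the net contraction groups
  have hUp : UPlus m ⊆ (Vplus : Set G) := fun u hu =>
    (hu : Tendsto (fun i => (m.toFun i)⁻¹ * u * m.toFun i) atTop (𝓝 1)).mono_left hV
  have hUm : UMinus m ⊆ (Vminus : Set G) := fun u hu =>
    (hu : Tendsto (fun i => m.toFun i * u * (m.toFun i)⁻¹) atTop (𝓝 1)).mono_left hV
  -- UZero elements have convergent conjugates along V
  have hUZθ : ∀ u ∈ UZero m,
      ∃ t : G, Tendsto (fun i => (b i)⁻¹ * u * b i) (V : Filter m.idx.ι) (𝓝 t) := by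
    intro u hu
    exact ultrafilter_tendsto_of_subnets (m.map (fun g => g⁻¹ * u * g)) hu.1 V hV
  have hUZη : ∀ u ∈ UZero m,
      ∃ t : G, Tendsto (fun i => b i * u * (b i)⁻¹) (V : Filter m.idx.ι) (𝓝 t) := by
    intro u hu
    exact ultrafilter_tendsto_of_subnets (m.map (fun g => g * u * g⁻¹)) hu.2 V hV
  -- the subgroup L
  set Lsub : Subgroup G := Subgroup.closure ((Vplus : Set G) ∪ (Vminus : Set G)) with hLsubdef
  set L : Subgroup G := Lsub.topologicalClosure with hLdef
  have hLc : IsClosed (L : Set G) := Subgroup.isClosed_topologicalClosure Lsub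
  have hLfix : ∀ g ∈ L, g • x' = x' := by
    have hstabclosed : IsClosed ((MulAction.stabilizer G x' : Subgroup G) : Set G) := by
      have heq : ((MulAction.stabilizer G x' : Subgroup G) : Set G)
          = (fun g : G => g • x') ⁻¹' {x'} := by
        ext g
        simp [MulAction.mem_stabilizer_iff]
      rw [heq]
      exact isClosed_singleton.preimage hsx
    have h1 : Lsub ≤ MulAction.stabilizer G x' := by
      rw [hLsubdef, Subgroup.closure_le]
      rintro v (hv | hv)
      · exact MulAction.mem_stabilizer_iff.mpr (hVplus_fix v hv)
      · exact MulAction.mem_stabilizer_iff.mpr (hVminus_fix v hv)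
    have h2 : L ≤ MulAction.stabilizer G x' :=
      Subgroup.topologicalClosure_minimal _ h1 hstabclosed
    exact fun g hg => MulAction.mem_stabilizer_iff.mp (h2 hg)
  -- conjugation stability of L
  have hconj : ∀ u : G,
      (∃ t : G, Tendsto (fun i => (b i)⁻¹ * u * b i) (V : Filter m.idx.ι) (𝓝 t)) →
      (∃ t : G, Tendsto (fun i => b i * u * (b i)⁻¹) (V : Filter m.idx.ι) (𝓝 t)) →
      ∀ w ∈ L, u * w * u⁻¹ ∈ L := by
    rintro u ⟨t₁, ht₁⟩ ⟨t₂, ht₂⟩ w hw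
    have hgen : ∀ v, v ∈ (Vplus : Set G) ∪ (Vminus : Set G) →
        u * v * u⁻¹ ∈ (Vplus : Set G) ∪ (Vminus : Set G) := by
      rintro v (hv | hv)
      · left
        have hv' : Tendsto (fun i => (b i)⁻¹ * v * b i) (V : Filter m.idx.ι) (𝓝 1) := hv
        have h3 := (ht₁.mul hv').mul ht₁.inv
        rw [mul_one, mul_inv_cancel] at h3
        exact h3.congr (fun i => by group)
      · right
        have hv' : Tendsto (fun i => b i * v * (b i)⁻¹) (V : Filter m.idx.ι) (𝓝 1) := hv
        have h3 := (ht₂.mul hv').mul ht₂.inv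
        rw [mul_one, mul_inv_cancel] at h3
        exact h3.congr (fun i => by group)
    have hLsubstable : ∀ w ∈ Lsub, u * w * u⁻¹ ∈ Lsub := by
      intro w hw
      rw [hLsubdef] at hw ⊢
      refine Subgroup.closure_induction
        (fun v hv => Subgroup.subset_closure (hgen v hv)) ?_ ?_ ?_ hw
      · have h1 : u * 1 * u⁻¹ = 1 := by group
        rw [h1]
        exact Subgroup.one_mem _
      · intro a c _ _ hia hic
        have h1 : u * (a * c) * u⁻¹ = (u * a * u⁻¹) * (u * c * u⁻¹) := by group
        rw [h1]
        exact Subgroup.mul_mem _ hia hic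
      · intro a _ hia
        have h1 : u * a⁻¹ * u⁻¹ = (u * a * u⁻¹)⁻¹ := by group
        rw [h1]
        exact Subgroup.inv_mem _ hia
    have hcont2 : Continuous fun g : G => u * g * u⁻¹ :=
      (continuous_mul_left u).mul continuous_const
    have himg : u * w * u⁻¹ ∈ closure ((fun g : G => u * g * u⁻¹) '' (Lsub : Set G)) :=
      image_closure_subset_closure_image hcont2 ⟨w, hw, rfl⟩
    have hsubL : (fun g : G => u * g * u⁻¹) '' (Lsub : Set G) ⊆ (Lsub : Set G) := by
      rintro _ ⟨a, ha, rfl⟩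
      exact hLsubstable a ha
    exact closure_mono hsubL himg
  -- normality of L
  have hnormmem : ∀ u : G,
      (∃ t : G, Tendsto (fun i => (b i)⁻¹ * u * b i) (V : Filter m.idx.ι) (𝓝 t)) →
      (∃ t : G, Tendsto (fun i => b i * u * (b i)⁻¹) (V : Filter m.idx.ι) (𝓝 t)) →
      u ∈ (Subgroup.normalizer (L : Set G)) := by
    rintro u h1 h2
    rw [Subgroup.mem_normalizer_iff]
    intro h
    constructor
    · exact fun hh => hconj u h1 h2 h hh
    · intro hh
      obtain ⟨t₁, ht₁⟩ := h1
      obtain ⟨t₂, ht₂⟩ := h2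
      have h1' : ∃ t : G, Tendsto (fun i => (b i)⁻¹ * u⁻¹ * b i) (V : Filter m.idx.ι) (𝓝 t) :=
        ⟨t₁⁻¹, ht₁.inv.congr (fun i => by group)⟩
      have h2' : ∃ t : G, Tendsto (fun i => b i * u⁻¹ * (b i)⁻¹) (V : Filter m.idx.ι) (𝓝 t) :=
        ⟨t₂⁻¹, ht₂.inv.congr (fun i => by group)⟩
      have h3 := hconj u⁻¹ h1' h2' _ hh
      have heq2 : u⁻¹ * (u * h * u⁻¹) * u⁻¹⁻¹ = h := by group
      rwa [heq2] at h3
  have hgens : (UPlus m ∪ UMinus m ∪ UZero m) ⊆ ((Subgroup.normalizer (L : Set G)) : Set G) := by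
    rintro u ((hu | hu) | hu)
    · have huL : u ∈ L := Subgroup.le_topologicalClosure _
        (Subgroup.subset_closure (Or.inl (hUp hu)))
      exact Subgroup.le_normalizer huL
    · have huL : u ∈ L := Subgroup.le_topologicalClosure _
        (Subgroup.subset_closure (Or.inr (hUm hu)))
      exact Subgroup.le_normalizer huL
    · exact hnormmem u (hUZθ u hu) (hUZη u hu)
  have hclosedN : IsClosed ((Subgroup.normalizer (L : Set G)) : Set G) := by
    have heq : ((Subgroup.normalizer (L : Set G)) : Set G) =
        {g : G | ∀ h ∈ (L : Set G), g * h * g⁻¹ ∈ (L : Set G)} ∩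
        {g : G | ∀ h ∈ (L : Set G), g⁻¹ * h * g ∈ (L : Set G)} := by
      ext g
      simp only [Set.mem_inter_iff, Set.mem_setOf_eq, SetLike.mem_coe,
        Subgroup.mem_normalizer_iff]
      constructor
      · intro hg
        refine ⟨fun h hh => (hg h).mp hh, fun h hh => ?_⟩
        have h4 := (hg (g⁻¹ * h * g)).mpr
        apply h4
        have heq3 : g * (g⁻¹ * h * g) * g⁻¹ = h := by group
        rwa [heq3]
      · rintro ⟨ha, hb⟩ h
        refine ⟨fun hh => ha h hh, fun hh => ?_⟩
        have h5 := hb _ hh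
        have heq4 : g⁻¹ * (g * h * g⁻¹) * g = h := by group
        rwa [heq4] at h5
    rw [heq]
    refine IsClosed.inter ?_ ?_
    · have heq5 : {g : G | ∀ h ∈ (L : Set G), g * h * g⁻¹ ∈ (L : Set G)}
          = ⋂ h ∈ (L : Set G), (fun g : G => g * h * g⁻¹) ⁻¹' (L : Set G) := by
        ext g
        simp [Set.mem_iInter₂]
      rw [heq5]
      exact isClosed_biInter (fun h _ => hLc.preimage
        (((continuous_mul_right h).mul continuous_inv : Continuous fun g : G => g * h * g⁻¹)))
    · have heq5 : {g : G | ∀ h ∈ (L : Set G), g⁻¹ * h * g ∈ (L : Set G)}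
          = ⋂ h ∈ (L : Set G), (fun g : G => g⁻¹ * h * g) ⁻¹' (L : Set G) := by
        ext g
        simp [Set.mem_iInter₂]
      rw [heq5]
      exact isClosed_biInter (fun h _ => hLc.preimage
        (((continuous_inv.mul continuous_const).mul continuous_id :
          Continuous fun g : G => g⁻¹ * h * g)))
  have hnormal : L.Normal := by
    have huniv : (Set.univ : Set G) ⊆ ((Subgroup.normalizer (L : Set G)) : Set G) := by
      have hle : (((Subgroup.closure (UPlus m ∪ UMinus m ∪ UZero m)) : Subgroup G) : Set G)
          ⊆ ((Subgroup.normalizer (L : Set G)) : Set G) := by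
        have := (Subgroup.closure_le (Subgroup.normalizer (L : Set G))).mpr hgens
        exact fun g hg => this hg
      rw [← hdense.closure_eq]
      exact closure_minimal hle hclosedN
    constructor
    intro h hh g
    have hg : g ∈ (Subgroup.normalizer (L : Set G)) := huniv (Set.mem_univ g)
    exact (Subgroup.mem_normalizer_iff.mp hg h).mp hh
  -- final contradiction
  have hcompact := hfix L hnormal ⟨x', hLfix⟩
  rw [hLc.closure_eq] at hcompact
  apply hnc
  refine IsCompact.of_isClosed_subset hcompact isClosed_closure ?_
  have hUpL : UPlus m ⊆ (L : Set G) := fun u hu =>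
    Subgroup.le_topologicalClosure _ (Subgroup.subset_closure (Or.inl (hUp hu)))
  exact closure_minimal hUpL hLc

end S5Aux

theorem statement5' {G X : Type*} [Group G] [TopologicalSpace G] [IsTopologicalGroup G]
    [LocallyCompactSpace G] [T2Space G] [MetricSpace X] [MulAction G X]
    (hqss : ∃ A : Subgroup G, IsClosed (A : Set G) ∧
      (∃ C : Set G, IsCompact C ∧ ∀ g : G, ∃ c ∈ C, ∃ a ∈ A, ∃ c' ∈ C, g = c * a * c') ∧
      ∀ n : DirNet G, (∀ i, n.toFun i ∈ A) →
        Filter.Tendsto n.toFun Filter.atTop (Filter.cocompact G) →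
        ∃ m : DirNet G, m.IsSubnet n ∧
          ¬ IsCompact (closure (UPlus m)) ∧
          Dense ((Subgroup.closure (UPlus m ∪ UMinus m ∪ UZero m) : Subgroup G) : Set G))
    (hiso : ∀ (g : G) (x y : X), dist (g • x) (g • y) = dist x y)
    (hcont : Continuous fun p : G × X => p.1 • p.2)
    (hfix : ∀ N : Subgroup G, N.Normal → (∃ x : X, ∀ g ∈ N, g • x = x) →
      IsCompact (closure (N : Set G))) :
    (∀ x : X, IsClosed (MulAction.orbit G x)) ∧
    (∀ x : X, IsCompact ((MulAction.stabilizer G x : Subgroup G) : Set G)) := by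
  classical
  open S5Aux Pointwise in
  obtain ⟨A, hAclosed, ⟨C, hCc, hCAC⟩, hqssnet⟩ := hqss
  choose cf hcf af haf cf' hcf' hdec using hCAC
  -- the central impossibility
  have main : ∀ (x y : X) (g : ℕ → G), Tendsto g atTop (cocompact G) →
      Tendsto (fun n => g n • x) atTop (𝓝 y) → False := by
    intro x y g hgesc hgx
    have hsxc : Continuous fun h : G => h • x :=
      hcont.comp (continuous_id.prodMk continuous_const)
    set α : ℕ → G := fun n => af (g n) with hα
    set pp : ℕ → X := fun n => cf' (g n) • x with hpp
    set qq : ℕ → X := fun n => (cf (g n))⁻¹ • (g n • x) with hqq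
    have hαesc : Tendsto α atTop (cocompact G) := by
      rw [Filter.tendsto_def]
      intro s hs
      rw [Filter.mem_cocompact] at hs
      obtain ⟨K, hK, hKs⟩ := hs
      have hCKC : IsCompact (C * K * C) := (hCc.mul hK).mul hCc
      have h2 := hgesc (Filter.mem_cocompact.mpr ⟨C * K * C, hCKC, subset_rfl⟩)
      refine Filter.mem_of_superset h2 (fun n hn => ?_)
      apply hKs
      intro hmem
      apply hn
      show g n ∈ C * K * C
      rw [hdec (g n)]
      exact Set.mul_mem_mul (Set.mul_mem_mul (hcf (g n)) hmem) (hcf' (g n))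
    have hpq : ∀ n, α n • pp n = qq n := by
      intro n
      show af (g n) • (cf' (g n) • x) = (cf (g n))⁻¹ • (g n • x)
      rw [smul_smul, smul_smul]
      congr 1
      have h4 : ∀ k c a c' : G, k = c * a * c' → a * c' = c⁻¹ * k := by
        intro k c a c' h
        rw [h]
        group
      exact h4 _ _ _ _ (hdec (g n))
    have hKp : IsCompact ((fun h : G => h • x) '' C) := hCc.image hsxc
    have hppmem : ∀ n, pp n ∈ (fun h : G => h • x) '' C := fun n => ⟨cf' (g n), hcf' _, rfl⟩
    set KQ : Set X := (fun pr : G × X => pr.1 • pr.2) ''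
        ((C⁻¹) ×ˢ (insert y (Set.range fun n => g n • x))) with hKQ
    have hKq : IsCompact KQ :=
      ((hCc.inv.prod hgx.isCompact_insert_range).image hcont)
    have hqqmem : ∀ n, qq n ∈ KQ := by
      intro n
      exact ⟨((cf (g n))⁻¹, g n • x),
        ⟨Set.inv_mem_inv.mpr (hcf _), Set.mem_insert_iff.mpr (Or.inr ⟨n, rfl⟩)⟩, rfl⟩
    obtain ⟨x₁, _, φ₁, hφ₁mono, hφ₁tend⟩ := hKp.isSeqCompact hppmem
    have hqmem₂ : ∀ n, (qq ∘ φ₁) n ∈ KQ := fun n => hqqmem _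
    obtain ⟨y₁, _, φ₂, hφ₂mono, hφ₂tend⟩ := hKq.isSeqCompact hqmem₂
    have hφmono : StrictMono (φ₁ ∘ φ₂) := hφ₁mono.comp hφ₂mono
    have hptend : Tendsto (pp ∘ (φ₁ ∘ φ₂)) atTop (𝓝 x₁) :=
      hφ₁tend.comp hφ₂mono.tendsto_atTop
    have hqtend : Tendsto (qq ∘ (φ₁ ∘ φ₂)) atTop (𝓝 y₁) := hφ₂tend
    exact S5Aux.propP hiso hcont hfix A hqssnet (α ∘ (φ₁ ∘ φ₂))
      (fun n => haf _) (hαesc.comp hφmono.tendsto_atTop)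
      x₁ y₁ (pp ∘ (φ₁ ∘ φ₂)) (qq ∘ (φ₁ ∘ φ₂)) (fun n => hpq _) hptend hqtend
  constructor
  · -- closed orbits
    intro x
    have hsxc : Continuous fun h : G => h • x :=
      hcont.comp (continuous_id.prodMk continuous_const)
    apply isClosed_of_closure_subset
    intro y hy
    rw [mem_closure_iff_seq_limit] at hy
    obtain ⟨u, hu, huy⟩ := hy
    choose g hg using fun n => MulAction.mem_orbit_iff.mp (hu n)
    have hgx : Tendsto (fun n => g n • x) atTop (𝓝 y) :=
      huy.congr (fun n => (hg n).symm)
    by_cases hcase : ∃ K : Set G, IsCompact K ∧ {n | g n ∈ K}.Infinite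
    · obtain ⟨K, hKc, hinf⟩ := hcase
      have hfreq : ∃ᶠ n in atTop, g n ∈ K := Nat.frequently_atTop_iff_infinite.mpr hinf
      haveI hne : (atTop ⊓ 𝓟 {n | g n ∈ K}).NeBot := Filter.frequently_iff_neBot.mp hfreq
      obtain ⟨U, hU⟩ := Filter.exists_ultrafilter_le (atTop ⊓ 𝓟 {n | g n ∈ K})
      have hUP : {n | g n ∈ K} ∈ U := by
        have := hU.trans inf_le_right
        exact Filter.le_principal_iff.mp this
      have hle : (Ultrafilter.map g U : Filter G) ≤ 𝓟 K := by
        rw [Filter.le_principal_iff]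
        rw [Ultrafilter.coe_map, Filter.mem_map]
        exact hUP
      obtain ⟨g₀, _, hg₀⟩ := hKc.ultrafilter_le_nhds (Ultrafilter.map g U) hle
      have htg : Tendsto g (U : Filter ℕ) (𝓝 g₀) := by
        rw [Ultrafilter.coe_map] at hg₀
        exact hg₀
      have h1 : Tendsto (fun n => g n • x) (U : Filter ℕ) (𝓝 (g₀ • x)) :=
        (hsxc.tendsto g₀).comp htg
      have h2 : Tendsto (fun n => g n • x) (U : Filter ℕ) (𝓝 y) :=
        hgx.mono_left (hU.trans inf_le_left)
      have hxy : y = g₀ • x := tendsto_nhds_unique h2 h1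
      rw [hxy]
      exact MulAction.mem_orbit _ _
    · push_neg at hcase
      have hesc : Tendsto g atTop (cocompact G) := by
        rw [Filter.tendsto_def]
        intro s hs
        rw [Filter.mem_cocompact] at hs
        obtain ⟨K, hKc, hKs⟩ := hs
        have hfin : {n | g n ∈ K}.Finite := hcase K hKc
        have hev : ∀ᶠ n in (Filter.cofinite : Filter ℕ), g n ∉ K := by
          rw [Filter.eventually_cofinite]
          simpa using hfin
        rw [Nat.cofinite_eq_atTop] at hev
        exact Filter.mem_of_superset hev (fun n hn => hKs hn)
      exact absurd (main x y g hesc hgx) not_false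
  · -- compact stabilizers
    intro x
    by_contra hnc
    have hclosed : IsClosed ((MulAction.stabilizer G x : Subgroup G) : Set G) := by
      have heq : ((MulAction.stabilizer G x : Subgroup G) : Set G)
          = (fun h : G => h • x) ⁻¹' {x} := by
        ext h
        simp [MulAction.mem_stabilizer_iff]
      rw [heq]
      exact isClosed_singleton.preimage (hcont.comp (continuous_id.prodMk continuous_const))
    obtain ⟨g, hgS, hgesc⟩ := S5Aux.exists_seq_tendsto_cocompact hclosed hnc
    refine main x x g hgesc ?_
    have hgx : ∀ n, g n • x = x := fun n => MulAction.mem_stabilizer_iff.mp (hgS n)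
    exact (tendsto_const_nhds : Tendsto (fun _ : ℕ => x) atTop (𝓝 x)).congr
      (fun n => (hgx n).symm)


end S5AuxSection

/-- A qss group acting by isometries and jointly continuously on a metric
space, such that every normal subgroup with a global fixed point has compact closure, has
closed orbits and compact point stabilizers. -/
theorem statement5 {G X : Type*} [Group G] [TopologicalSpace G] [IsTopologicalGroup G]
    [LocallyCompactSpace G] [T2Space G] [MetricSpace X] [MulAction G X]
    (hqss : IsQSS G)
    (hiso : ∀ (g : G) (x y : X), dist (g • x) (g • y) = dist x y)
    (hcont : Continuous fun p : G × X => p.1 • p.2)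
    (hfix : ∀ N : Subgroup G, N.Normal → (∃ x : X, ∀ g ∈ N, g • x = x) →
      IsCompact (closure (N : Set G))) :
    (∀ x : X, IsClosed (MulAction.orbit G x)) ∧
    (∀ x : X, IsCompact (MulAction.stabilizer G x : Set G)) :=
  statement5' hqss hiso hcont hfix
end

section
/- Let the group G = SL₂(ℝ) act on a metric space X by isometries, with jointly continuous action map G × X → X. Then for every point x₀ ∈ X, either x₀ is a global fixed point (g·x₀ = x₀ for all g ∈ G) or its stabilizer {g ∈ G : g·x₀ = x₀} is compact. -/
open Filter Topology Matrix

/-- The standard topology on `SL₂(ℝ)`, induced from the space of `2 × 2` real matrices. -/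
instance : TopologicalSpace (Matrix.SpecialLinearGroup (Fin 2) ℝ) :=
  TopologicalSpace.induced
    (fun g : Matrix.SpecialLinearGroup (Fin 2) ℝ => (g : Matrix (Fin 2) (Fin 2) ℝ))
    inferInstance

namespace Statement6Aux

abbrev M2 := Matrix (Fin 2) (Fin 2) ℝ
abbrev SL2 := Matrix.SpecialLinearGroup (Fin 2) ℝ

lemma s6_det_one_add_smul (t : ℝ) (W : M2) (htr : Matrix.trace W = 0) (hdet : W.det = 0) :
    (1 + t • W).det = 1 := by
  rw [Matrix.trace_fin_two] at htr
  rw [Matrix.det_fin_two] at hdet ⊢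
  simp only [Matrix.add_apply, Matrix.smul_apply, Matrix.one_apply, smul_eq_mul]
  norm_num
  linear_combination t * htr + t^2 * hdet

lemma s6_trace_conj (Q W : M2) (htr : Matrix.trace W = 0) :
    Matrix.trace (Q * W * Q.adjugate) = 0 := by
  rw [Matrix.trace_mul_comm, ← Matrix.mul_assoc, Matrix.adjugate_mul, Matrix.smul_mul,
    Matrix.one_mul, Matrix.trace_smul, htr, smul_zero]

lemma s6_det_one_add_conj (t : ℝ) (Q W : M2) (htr : Matrix.trace W = 0) (hdet : W.det = 0) :
    (1 + t • (Q * W * Q.adjugate)).det = 1 := by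
  apply s6_det_one_add_smul
  · exact s6_trace_conj Q W htr
  · rw [Matrix.det_mul, Matrix.det_mul, hdet]; ring

lemma s6_swap_aux (A W : M2) (hA : A.det = 1) (c t : ℝ) :
    (1 + t • ((c • A) * W * (c • A).adjugate)) * A = A * (1 + (t * c^2) • W) := by
  have h1 : (c • A).adjugate = c • A.adjugate := by
    rw [Matrix.adjugate_smul]; norm_num
  have h2 : A.adjugate * A = 1 := by rw [Matrix.adjugate_mul, hA, one_smul]
  rw [h1, Matrix.add_mul, Matrix.mul_add, Matrix.one_mul, Matrix.mul_one]
  congr 1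
  rw [Matrix.smul_mul, Matrix.mul_smul, Matrix.smul_mul, Matrix.smul_mul, Matrix.mul_smul,
    Matrix.mul_assoc, h2, Matrix.mul_one, smul_smul, smul_smul]
  congr 1
  ring

lemma s6_mulE12 (p q r s : ℝ) :
    !![p,q;r,s] * !![0,1;0,0] * (!![p,q;r,s] : M2).adjugate = !![-(p*r), p^2; -(r^2), p*r] := by
  rw [Matrix.adjugate_fin_two_of]
  simp [Matrix.mul_fin_two]
  ring_nf
  exact ⟨trivial, trivial, trivial⟩

lemma s6_mulE21 (p q r s : ℝ) :
    !![p,q;r,s] * !![0,0;1,0] * (!![p,q;r,s] : M2).adjugate = !![q*s, -(q^2); s^2, -(q*s)] := by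
  rw [Matrix.adjugate_fin_two_of]
  simp [Matrix.mul_fin_two]
  ring_nf
  exact ⟨trivial, trivial, trivial⟩

lemma s6_detU (t : ℝ) : (!![1,t;0,1] : M2).det = 1 := by
  simp [Matrix.det_fin_two_of]

lemma s6_detLo (t : ℝ) : (!![1,0;t,1] : M2).det = 1 := by
  simp [Matrix.det_fin_two_of]

lemma s6_detPsi (M ε : ℝ) (hM : M ≠ 0) : (!![M,0;ε,M⁻¹] : M2).det = 1 := by
  simp [Matrix.det_fin_two_of]
  field_simp

lemma s6_trick (M ε : ℝ) (hM : M ≠ 0) (hε : ε ≠ 0) :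
    !![1,(1-M)/ε;0,1] * !![M,0;ε,M⁻¹] * (!![1,(1-M⁻¹)/ε;0,1] : M2) = !![1,0;ε,1] := by
  ext i j
  fin_cases i <;> fin_cases j <;>
    simp [Matrix.mul_apply, Fin.sum_univ_two] <;> field_simp <;> ring

lemma s6_dlo_swap (M t : ℝ) (hM : M ≠ 0) :
    !![M,0;0,M⁻¹] * (!![1,0;t,1] : M2) = !![1,0;t*(M⁻¹*M⁻¹),1] * !![M,0;0,M⁻¹] := by
  ext i j
  fin_cases i <;> fin_cases j <;>
    simp [Matrix.mul_apply, Fin.sum_univ_two] <;> field_simp <;> ring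

lemma s6_ldu (a b c d : ℝ) (ha : a ≠ 0) (hdet : a*d - b*c = 1) :
    !![1,0;c/a,1] * ((!![a,0;0,a⁻¹] : M2) * !![1,b/a;0,1]) = !![a,b;c,d] := by
  ext i j
  fin_cases i <;> fin_cases j <;>
    simp [Matrix.mul_apply, Fin.sum_univ_two] <;> field_simp <;> linarith [hdet]

lemma s6_wdecomp : !![1,(-1:ℝ);0,1] * ((!![1,0;1,1] : M2) * !![1,-1;0,1]) = !![0,-1;1,0] := by
  ext i j
  fin_cases i <;> fin_cases j <;>
    simp [Matrix.mul_apply, Fin.sum_univ_two]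

lemma s6_conj_det (v₁ v₂ : ℝ) (h : v₁^2 + v₂^2 ≠ 0) :
    (!![v₁/Real.sqrt (v₁^2+v₂^2), -(v₂/Real.sqrt (v₁^2+v₂^2));
       v₂/Real.sqrt (v₁^2+v₂^2), v₁/Real.sqrt (v₁^2+v₂^2)] : M2).det = 1 := by
  have hnn : (0:ℝ) ≤ v₁^2 + v₂^2 := by positivity
  have he : Real.sqrt (v₁^2+v₂^2) ^ 2 = v₁^2+v₂^2 := Real.sq_sqrt hnn
  have hene : Real.sqrt (v₁^2+v₂^2) ≠ 0 := by
    intro h0; rw [h0] at he; simp at he; exact h he.symm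
  rw [Matrix.det_fin_two_of]
  field_simp
  linarith [he]

lemma s6_conj_swap (v₁ v₂ t : ℝ) (h : v₁^2 + v₂^2 ≠ 0) :
    (!![v₁/Real.sqrt (v₁^2+v₂^2), -(v₂/Real.sqrt (v₁^2+v₂^2));
       v₂/Real.sqrt (v₁^2+v₂^2), v₁/Real.sqrt (v₁^2+v₂^2)] : M2) * !![1,t;0,1]
    = (1 + (t/(v₁^2+v₂^2)) • !![-(v₁*v₂), v₁^2; -(v₂^2), v₁*v₂]) *
      !![v₁/Real.sqrt (v₁^2+v₂^2), -(v₂/Real.sqrt (v₁^2+v₂^2));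
       v₂/Real.sqrt (v₁^2+v₂^2), v₁/Real.sqrt (v₁^2+v₂^2)] := by
  have hnn : (0:ℝ) ≤ v₁^2 + v₂^2 := by positivity
  have he : Real.sqrt (v₁^2+v₂^2) ^ 2 = v₁^2+v₂^2 := Real.sq_sqrt hnn
  have hene : Real.sqrt (v₁^2+v₂^2) ≠ 0 := by
    intro h0; rw [h0] at he; simp at he; exact h he.symm
  ext i j
  fin_cases i <;> fin_cases j <;>
    simp [Matrix.mul_apply, Fin.sum_univ_two, Matrix.add_apply, Matrix.smul_apply,
      Matrix.one_apply] <;> field_simp <;> linarith [he]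

lemma s6_choose_M (P : M2) (hP : P ≠ 0) :
    ∃ (M₀ : M2) (v₁ v₂ σ : ℝ), Matrix.trace M₀ = 0 ∧ M₀.det = 0 ∧ v₁^2+v₂^2 ≠ 0 ∧ σ * σ = 1 ∧
      P * M₀ * P.adjugate = σ • !![-(v₁*v₂), v₁^2; -(v₂^2), v₁*v₂] := by
  by_cases h1 : P 0 0 = 0 ∧ P 1 0 = 0
  · refine ⟨!![0,0;1,0], P 0 1, P 1 1, -1, by simp [Matrix.trace_fin_two],
      by simp [Matrix.det_fin_two_of], ?_, by norm_num, ?_⟩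
    · intro hqs
      apply hP
      have hq : P 0 1 = 0 := by
        have h2 : P 0 1 ^ 2 = 0 := by nlinarith [sq_nonneg (P 1 1)]
        exact (pow_eq_zero_iff two_ne_zero).mp h2
      have hs : P 1 1 = 0 := by
        have h2 : P 1 1 ^ 2 = 0 := by nlinarith [sq_nonneg (P 0 1)]
        exact (pow_eq_zero_iff two_ne_zero).mp h2
      rw [Matrix.eta_fin_two P, h1.1, h1.2, hq, hs]
      ext i j; fin_cases i <;> fin_cases j <;> simp
    · conv_lhs => rw [Matrix.eta_fin_two P]
      rw [s6_mulE21]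
      ext i j; fin_cases i <;> fin_cases j <;> simp [Matrix.smul_apply] <;> ring
  · rw [not_and_or] at h1
    refine ⟨!![0,1;0,0], P 0 0, P 1 0, 1, by simp [Matrix.trace_fin_two],
      by simp [Matrix.det_fin_two_of], ?_, by norm_num, ?_⟩
    · rcases h1 with h | h <;> positivity
    · conv_lhs => rw [Matrix.eta_fin_two P]
      rw [s6_mulE12, one_smul]

lemma s6_inducing : Topology.IsInducing (fun g : SL2 => (g : M2)) := ⟨rfl⟩

lemma s6_ext {a b : SL2} (h : (a : M2) = b) : a = b := Subtype.ext h

lemma s6_contG {α : Type*} [TopologicalSpace α] {f : α → SL2}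
    (hf : Continuous fun x => ((f x : M2))) : Continuous f := by
  rw [s6_inducing.continuous_iff]; exact hf

lemma s6_entry_cont (i j : Fin 2) : Continuous fun m : M2 => m i j :=
  (continuous_apply j).comp (continuous_apply i)

lemma s6_contCurve {α : Type*} [TopologicalSpace α] {a b c d : α → ℝ}
    (ha : Continuous a) (hb : Continuous b) (hc : Continuous c) (hd : Continuous d) :
    Continuous fun x => (!![a x, b x; c x, d x] : M2) := by
  apply continuous_matrix
  intro i j
  fin_cases i <;> fin_cases j
  · simpa using ha
  · simpa using hb
  · simpa using hc
  · simpa using hd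

noncomputable def s6_rm (m : M2) : ℝ := ∑ i, ∑ j, |m i j|

lemma s6_rm_entry_le (m : M2) (i j : Fin 2) : |m i j| ≤ s6_rm m := by
  calc |m i j| ≤ ∑ j', |m i j'| :=
        Finset.single_le_sum (fun k _ => abs_nonneg (m i k)) (Finset.mem_univ j)
    _ ≤ s6_rm m :=
        Finset.single_le_sum (f := fun i' => ∑ j', |m i' j'|)
          (fun k _ => Finset.sum_nonneg fun l _ => abs_nonneg _) (Finset.mem_univ i)

lemma s6_rm_cont : Continuous s6_rm := by
  apply continuous_finset_sum
  intro i _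
  apply continuous_finset_sum
  intro j _
  exact (s6_entry_cont i j).abs

lemma s6_rm_smul (c : ℝ) (hc : 0 ≤ c) (m : M2) : s6_rm (c • m) = c * s6_rm m := by
  simp only [s6_rm, Matrix.smul_apply, smul_eq_mul, abs_mul, abs_of_nonneg hc, Finset.mul_sum]

noncomputable def s6_U (t : ℝ) : SL2 := ⟨!![1,t;0,1], s6_detU t⟩
noncomputable def s6_Lo (t : ℝ) : SL2 := ⟨!![1,0;t,1], s6_detLo t⟩
noncomputable def s6_D (M : ℝ) (hM : M ≠ 0) : SL2 := ⟨!![M,0;0,M⁻¹], s6_detPsi M 0 hM⟩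
noncomputable def s6_psi (M : ℝ) (hM : M ≠ 0) (ε : ℝ) : SL2 := ⟨!![M,0;ε,M⁻¹], s6_detPsi M ε hM⟩
noncomputable def s6_W : SL2 := ⟨!![0,-1;1,0], by simp [Matrix.det_fin_two_of]⟩

end Statement6Aux

open Statement6Aux

set_option maxHeartbeats 1000000 in
/-- **toy case.** If `SL₂(ℝ)` acts continuously by isometries on a metric
space `X`, then every point `x₀` is either a global fixed point or has compact
stabilizer. -/
theorem statement6 {X : Type*} [MetricSpace X]
    [MulAction (Matrix.SpecialLinearGroup (Fin 2) ℝ) X]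
    (hiso : ∀ (g : Matrix.SpecialLinearGroup (Fin 2) ℝ) (x y : X),
      dist (g • x) (g • y) = dist x y)
    (hcont : Continuous fun p : Matrix.SpecialLinearGroup (Fin 2) ℝ × X => p.1 • p.2)
    (x₀ : X) :
    (∀ g : Matrix.SpecialLinearGroup (Fin 2) ℝ, g • x₀ = x₀) ∨
    IsCompact {g : Matrix.SpecialLinearGroup (Fin 2) ℝ | g • x₀ = x₀} := by
  rw [or_iff_not_imp_right]
  intro hnc
  -- the displacement function
  set f : SL2 → ℝ := fun g => dist (g • x₀) x₀ with hfdef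
  have hsmul : Continuous fun g : SL2 => g • x₀ :=
    hcont.comp (continuous_id.prodMk continuous_const)
  have hfcont : Continuous f := hsmul.dist continuous_const
  have hfzero : ∀ g : SL2, f g = 0 ↔ g • x₀ = x₀ := fun g => dist_eq_zero
  have hf1 : f 1 = 0 := by simp [hfdef]
  have hfL : ∀ z g : SL2, z • x₀ = x₀ → f (z * g) = f g := by
    intro z g hz
    show dist ((z * g) • x₀) x₀ = dist (g • x₀) x₀
    rw [mul_smul]
    have h2 := hiso z (g • x₀) x₀
    rw [hz] at h2
    exact h2
  have hfR : ∀ z g : SL2, z • x₀ = x₀ → f (g * z) = f g := by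
    intro z g hz
    show dist ((g * z) • x₀) x₀ = dist (g • x₀) x₀
    rw [mul_smul, hz]
  have hinvmem : ∀ z : SL2, z • x₀ = x₀ → z⁻¹ • x₀ = x₀ := by
    intro z hz
    conv_lhs => rw [← hz]
    rw [inv_smul_smul]
  -- embedding facts
  have hemb : Topology.IsEmbedding (fun g : SL2 => (g : M2)) :=
    ⟨s6_inducing, Subtype.coe_injective⟩
  have hclemb : Topology.IsClosedEmbedding (fun g : SL2 => (g : M2)) := by
    refine ⟨hemb, ?_⟩
    have hr : Set.range (fun g : SL2 => (g : M2)) = {m : M2 | m.det = 1} := by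
      ext m
      constructor
      · rintro ⟨g, rfl⟩; exact g.2
      · intro hm; exact ⟨⟨m, hm⟩, rfl⟩
    rw [hr]
    exact isClosed_singleton.preimage continuous_id.matrix_det
  have hZclosed : IsClosed {g : SL2 | g • x₀ = x₀} := isClosed_singleton.preimage hsmul
  -- an unbounded sequence in the stabilizer
  have hex : ∀ n : ℕ, ∃ g : SL2, (g • x₀ = x₀) ∧ (n : ℝ) < s6_rm (g : M2) := by
    intro n
    by_contra hb
    push_neg at hb
    refine hnc ?_
    rw [hemb.isCompact_iff]
    have hbox : IsCompact (Set.univ.pi fun _ : Fin 2 =>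
        Set.univ.pi fun _ : Fin 2 => Set.Icc (-(n:ℝ)) n) :=
      isCompact_univ_pi fun _ => isCompact_univ_pi fun _ => isCompact_Icc
    apply hbox.of_isClosed_subset (hclemb.isClosedMap _ hZclosed)
    rintro m ⟨g, hg, rfl⟩
    apply Set.mem_univ_pi.mpr
    intro i
    rw [Set.mem_univ_pi]
    intro j
    have h1 : |(g : M2) i j| ≤ s6_rm (g : M2) := s6_rm_entry_le _ i j
    have h2 := abs_le.mp (le_trans h1 (hb g hg))
    exact Set.mem_Icc.mpr h2
  choose h hhZ hhr using hex
  have hrpos : ∀ n : ℕ, 0 < s6_rm (h n : M2) :=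
    fun n => lt_of_le_of_lt (Nat.cast_nonneg n) (hhr n)
  -- normalized sequence and convergent subsequence
  set Pn : ℕ → M2 := fun n => (s6_rm (h n : M2))⁻¹ • (h n : M2) with hPndef
  have hScomp : IsCompact (Set.univ.pi fun _ : Fin 2 =>
      Set.univ.pi fun _ : Fin 2 => Set.Icc (-(1:ℝ)) 1) :=
    isCompact_univ_pi fun _ => isCompact_univ_pi fun _ => isCompact_Icc
  have hPmem : ∀ n, Pn n ∈ (Set.univ.pi fun _ : Fin 2 =>
      Set.univ.pi fun _ : Fin 2 => Set.Icc (-(1:ℝ)) 1) := by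
    intro n
    apply Set.mem_univ_pi.mpr
    intro i
    rw [Set.mem_univ_pi]
    intro j
    rw [Set.mem_Icc, ← abs_le]
    have : |Pn n i j| = (s6_rm (h n : M2))⁻¹ * |(h n : M2) i j| := by
      rw [hPndef]
      simp only [Matrix.smul_apply, smul_eq_mul, abs_mul,
        abs_of_nonneg (le_of_lt (inv_pos.mpr (hrpos n)))]
    rw [this]
    rw [inv_mul_le_iff₀ (hrpos n), mul_one]
    exact s6_rm_entry_le _ i j
  obtain ⟨P', _, φ, hφ, hPtend⟩ := hScomp.tendsto_subseq hPmem
  obtain ⟨P, hPP'⟩ : ∃ P : M2, P = P' := ⟨P', rfl⟩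
  rw [← hPP'] at hPtend
  -- the limit is nonzero with determinant zero
  have hrtend : Tendsto (fun n => s6_rm (h (φ n) : M2)) atTop atTop := by
    apply tendsto_atTop_mono (fun n => le_of_lt (lt_of_le_of_lt (Nat.cast_le.mpr hφ.le_apply) (hhr (φ n))))
    exact tendsto_natCast_atTop_atTop
  have hrmPn : ∀ n, s6_rm (Pn n) = 1 := by
    intro n
    rw [hPndef]
    simp only []
    rw [s6_rm_smul _ (le_of_lt (inv_pos.mpr (hrpos n))) _]
    exact inv_mul_cancel₀ (ne_of_gt (hrpos n))
  have hrmP : s6_rm P = 1 := by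
    have h1 : Tendsto (fun n => s6_rm (Pn (φ n))) atTop (𝓝 (s6_rm P)) :=
      (s6_rm_cont.tendsto P).comp hPtend
    have h2 : Tendsto (fun n => s6_rm (Pn (φ n))) atTop (𝓝 1) := by
      simp only [hrmPn]
      exact tendsto_const_nhds
    exact tendsto_nhds_unique h1 h2
  have hPne : P ≠ 0 := by
    intro h0
    rw [h0] at hrmP
    simp [s6_rm] at hrmP
  have hPdet : P.det = 0 := by
    have h1 : Tendsto (fun n => (Pn (φ n)).det) atTop (𝓝 P.det) :=
      (continuous_id.matrix_det.tendsto P).comp hPtend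
    have h2 : Tendsto (fun n => (Pn (φ n)).det) atTop (𝓝 0) := by
      have he : ∀ n : ℕ, (Pn (φ n)).det = ((s6_rm (h (φ n) : M2))⁻¹)^2 := by
        intro n
        rw [hPndef]
        simp only []
        rw [Matrix.det_smul]
        simp [(h (φ n)).2]
      rw [funext he]
      have h3 : Tendsto (fun n => (s6_rm (h (φ n) : M2))⁻¹) atTop (𝓝 0) :=
        hrtend.inv_tendsto_atTop
      simpa using h3.pow 2
    exact tendsto_nhds_unique h1 h2
  -- choose the nilpotent direction
  obtain ⟨M₀, v₁, v₂, σ, hM₀tr, hM₀det, hκ, hσ, hNform⟩ := s6_choose_M P hPne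
  set N₀ : M2 := P * M₀ * P.adjugate with hN₀def
  set u : ℝ → SL2 := fun t => ⟨1 + t • N₀, s6_det_one_add_conj t P M₀ hM₀tr hM₀det⟩ with hudef
  set η : ℝ → SL2 := fun x => ⟨1 + x • M₀, by
    simpa using s6_det_one_add_conj x 1 M₀ hM₀tr hM₀det⟩ with hηdef
  have hηcont : Continuous η := by
    apply s6_contG
    exact continuous_const.add (continuous_id.smul continuous_const)
  -- every 1 + t • N₀ fixes x₀
  have hu : ∀ t : ℝ, f (u t) = 0 := by
    intro t
    have hdetseq : ∀ n : ℕ, (1 + t • (Pn (φ n) * M₀ * (Pn (φ n)).adjugate)).det = 1 :=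
      fun n => s6_det_one_add_conj t _ M₀ hM₀tr hM₀det
    set w : ℕ → SL2 := fun n => ⟨_, hdetseq n⟩ with hwdef
    have hswap : ∀ n : ℕ, w n * h (φ n) = h (φ n) * η (t * ((s6_rm (h (φ n) : M2))⁻¹)^2) := by
      intro n
      apply s6_ext
      show (1 + t • (Pn (φ n) * M₀ * (Pn (φ n)).adjugate)) * ((h (φ n) : M2))
          = ((h (φ n) : M2)) * (1 + (t * ((s6_rm (h (φ n) : M2))⁻¹)^2) • M₀)
      have := s6_swap_aux (h (φ n) : M2) M₀ (h (φ n)).2 (s6_rm (h (φ n) : M2))⁻¹ t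
      rw [hPndef]
      exact this
    have hwn : ∀ n : ℕ, f (w n) = f (η (t * ((s6_rm (h (φ n) : M2))⁻¹)^2)) := by
      intro n
      have h1 : w n = h (φ n) * η (t * ((s6_rm (h (φ n) : M2))⁻¹)^2) * (h (φ n))⁻¹ := by
        rw [eq_mul_inv_iff_mul_eq, hswap n]
      rw [h1, hfR _ _ (hinvmem _ (hhZ (φ n))), hfL _ _ (hhZ (φ n))]
    have hwtend : Tendsto w atTop (𝓝 (u t)) := by
      rw [s6_inducing.tendsto_nhds_iff]
      have hmapcont : Continuous fun m : M2 => 1 + t • (m * M₀ * m.adjugate) :=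
        continuous_const.add (((continuous_id.matrix_mul continuous_const).matrix_mul
          continuous_id.matrix_adjugate).const_smul t)
      have h2 := (hmapcont.tendsto P).comp hPtend
      exact h2
    have h2 : Tendsto (fun n => f (w n)) atTop (𝓝 (f (u t))) :=
      (hfcont.tendsto _).comp hwtend
    have hxtend : Tendsto (fun n => t * ((s6_rm (h (φ n) : M2))⁻¹)^2) atTop (𝓝 0) := by
      have h3 := hrtend.inv_tendsto_atTop
      have h4 : Tendsto (fun n => ((s6_rm (h (φ n) : M2))⁻¹)^2) atTop (𝓝 0) := by
        simpa using h3.pow 2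
      simpa using h4.const_mul t
    have hη0 : η 0 = 1 := by
      apply s6_ext
      show 1 + (0:ℝ) • M₀ = ((1 : SL2) : M2)
      rw [Matrix.SpecialLinearGroup.coe_one]
      simp
    have h6 : Tendsto (fun n => f (η (t * ((s6_rm (h (φ n) : M2))⁻¹)^2))) atTop (𝓝 0) := by
      have h7 := ((hfcont.comp hηcont).tendsto 0).comp hxtend
      simp only [Function.comp] at h7
      rw [hη0, hf1] at h7
      exact h7
    have h8 : Tendsto (fun n => f (w n)) atTop (𝓝 0) := by
      rw [funext hwn]
      exact h6
    exact tendsto_nhds_unique h2 h8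
  -- conjugation taking the standard unipotent group into the stabilizer
  set C : SL2 := ⟨_, s6_conj_det v₁ v₂ hκ⟩ with hCdef
  set F : SL2 → ℝ := fun g => f (C * g * C⁻¹) with hFdef
  have hFcont : Continuous F := by
    apply hfcont.comp
    apply s6_contG
    show Continuous fun g : SL2 => ((C : M2) * (g : M2) * ((C⁻¹ : SL2) : M2))
    exact (continuous_const.matrix_mul s6_inducing.continuous).matrix_mul continuous_const
  have hF1 : F 1 = 0 := by
    have : C * 1 * C⁻¹ = 1 := by group
    rw [hFdef]
    simp only []
    rw [this, hf1]
  have hFL : ∀ z g : SL2, F z = 0 → F (z * g) = F g := by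
    intro z g hz
    have hz' : (C * z * C⁻¹) • x₀ = x₀ := (hfzero _).mp hz
    have he : C * (z * g) * C⁻¹ = (C * z * C⁻¹) * (C * g * C⁻¹) := by group
    rw [hFdef]
    simp only []
    rw [he, hfL _ _ hz']
  have hFR : ∀ z g : SL2, F z = 0 → F (g * z) = F g := by
    intro z g hz
    have hz' : (C * z * C⁻¹) • x₀ = x₀ := (hfzero _).mp hz
    have he : C * (g * z) * C⁻¹ = (C * g * C⁻¹) * (C * z * C⁻¹) := by group
    rw [hFdef]
    simp only []
    rw [he, hfR _ _ hz']
  -- the standard unipotent group is in the zero set of F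
  have hμ : σ / (v₁^2+v₂^2) ≠ 0 := by
    apply div_ne_zero
    · intro h0; rw [h0] at hσ; simp at hσ
    · exact hκ
  have hFU : ∀ t : ℝ, F (s6_U t) = 0 := by
    intro t
    have hCswap : C * s6_U t = u (σ / (v₁^2+v₂^2) * t) * C := by
      apply s6_ext
      show (C : M2) * !![1,t;0,1] = (1 + (σ / (v₁^2+v₂^2) * t) • N₀) * (C : M2)
      have h1 := s6_conj_swap v₁ v₂ t hκ
      have h2 : (t/(v₁^2+v₂^2)) • (!![-(v₁*v₂), v₁^2; -(v₂^2), v₁*v₂] : M2)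
          = (σ / (v₁^2+v₂^2) * t) • N₀ := by
        rw [hNform, smul_smul]
        congr 1
        field_simp
        linear_combination (-t) * hσ
      rw [hCdef]
      rw [h1, h2]
    rw [hFdef]
    simp only []
    rw [hCswap, mul_inv_cancel_right]
    exact hu _
  -- diagonal matrices are in the zero set of F
  have hFD : ∀ (M : ℝ) (hM : M ≠ 0), F (s6_D M hM) = 0 := by
    intro M hM
    have hkey : ∀ ε : ℝ, ε ≠ 0 → F (s6_psi M hM ε) = F (s6_Lo ε) := by
      intro ε hε
      have hmat : s6_U ((1-M)/ε) * s6_psi M hM ε * s6_U ((1-M⁻¹)/ε) = s6_Lo ε := by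
        apply s6_ext
        show !![1,(1-M)/ε;0,1] * !![M,0;ε,M⁻¹] * (!![1,(1-M⁻¹)/ε;0,1] : M2) = !![1,0;ε,1]
        exact s6_trick M ε hM hε
      calc F (s6_psi M hM ε)
          = F (s6_U ((1-M)/ε) * s6_psi M hM ε * s6_U ((1-M⁻¹)/ε)) := by
            rw [hFR _ _ (hFU _), hFL _ _ (hFU _)]
        _ = F (s6_Lo ε) := by rw [hmat]
    have hψcont : Continuous fun ε => F (s6_psi M hM ε) := by
      apply hFcont.comp
      apply s6_contG
      exact s6_contCurve continuous_const continuous_const continuous_id continuous_const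
    have hχcont : Continuous fun ε => F (s6_Lo ε) := by
      apply hFcont.comp
      apply s6_contG
      exact s6_contCurve continuous_const continuous_const continuous_id continuous_const
    have hεtend : Tendsto (fun n : ℕ => ((n:ℝ)+1)⁻¹) atTop (𝓝 0) := by
      simpa [one_div] using tendsto_one_div_add_atTop_nhds_zero_nat (𝕜 := ℝ)
    have hεne : ∀ n : ℕ, ((n:ℝ)+1)⁻¹ ≠ 0 := by
      intro n
      positivity
    have h1 : Tendsto (fun n : ℕ => F (s6_psi M hM (((n:ℝ)+1)⁻¹))) atTop
        (𝓝 (F (s6_psi M hM 0))) := (hψcont.tendsto 0).comp hεtend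
    have h2 : Tendsto (fun n : ℕ => F (s6_psi M hM (((n:ℝ)+1)⁻¹))) atTop
        (𝓝 (F (s6_Lo 0))) := by
      have h3 : (fun n : ℕ => F (s6_psi M hM (((n:ℝ)+1)⁻¹)))
          = fun n : ℕ => F (s6_Lo (((n:ℝ)+1)⁻¹)) := funext fun n => hkey _ (hεne n)
      rw [h3]
      exact (hχcont.tendsto 0).comp hεtend
    have h4 : F (s6_psi M hM 0) = F (s6_Lo 0) := tendsto_nhds_unique h1 h2
    have h5 : s6_psi M hM 0 = s6_D M hM := rfl
    have h6 : s6_Lo 0 = 1 := by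
      apply s6_ext
      show (!![1,0;0,1] : M2) = ((1 : SL2) : M2)
      rw [Matrix.SpecialLinearGroup.coe_one, Matrix.one_fin_two]
    rw [h5, h6, hF1] at h4
    exact h4
  -- lower unipotent matrices are in the zero set of F
  have hFLo : ∀ t : ℝ, F (s6_Lo t) = 0 := by
    intro t
    have hstep : ∀ (M : ℝ) (hM : M ≠ 0), F (s6_Lo t) = F (s6_Lo (t*(M⁻¹*M⁻¹))) := by
      intro M hM
      have hmat : s6_D M hM * s6_Lo t = s6_Lo (t*(M⁻¹*M⁻¹)) * s6_D M hM := by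
        apply s6_ext
        exact s6_dlo_swap M t hM
      have h1 : F (s6_D M hM * s6_Lo t) = F (s6_Lo t) := hFL _ _ (hFD M hM)
      have h2 : F (s6_Lo (t*(M⁻¹*M⁻¹)) * s6_D M hM) = F (s6_Lo (t*(M⁻¹*M⁻¹))) :=
        hFR _ _ (hFD M hM)
      rw [← h1, hmat, h2]
    have hLocont : Continuous fun x => F (s6_Lo x) := by
      apply hFcont.comp
      apply s6_contG
      exact s6_contCurve continuous_const continuous_const continuous_id continuous_const
    have hMne : ∀ n : ℕ, ((n:ℝ)+1) ≠ 0 := by intro n; positivity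
    have hεtend : Tendsto (fun n : ℕ => ((n:ℝ)+1)⁻¹) atTop (𝓝 0) := by
      simpa [one_div] using tendsto_one_div_add_atTop_nhds_zero_nat (𝕜 := ℝ)
    have h1 : Tendsto (fun n : ℕ => F (s6_Lo (t * (((n:ℝ)+1)⁻¹ * ((n:ℝ)+1)⁻¹)))) atTop
        (𝓝 (F (s6_Lo 0))) := by
      have h2 : Tendsto (fun n : ℕ => t * (((n:ℝ)+1)⁻¹ * ((n:ℝ)+1)⁻¹)) atTop (𝓝 0) := by
        simpa using (hεtend.mul hεtend).const_mul t
      exact (hLocont.tendsto 0).comp h2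
    have h3 : (fun n : ℕ => F (s6_Lo (t * (((n:ℝ)+1)⁻¹ * ((n:ℝ)+1)⁻¹))))
        = fun _ : ℕ => F (s6_Lo t) := funext fun n => (hstep _ (hMne n)).symm
    rw [h3] at h1
    have h4 : F (s6_Lo t) = F (s6_Lo 0) := tendsto_nhds_unique tendsto_const_nhds h1
    have h6 : s6_Lo 0 = 1 := by
      apply s6_ext
      show (!![1,0;0,1] : M2) = ((1 : SL2) : M2)
      rw [Matrix.SpecialLinearGroup.coe_one, Matrix.one_fin_two]
    rw [h4, h6, hF1]
  -- F vanishes on elements with nonzero top-left entry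
  have hFa : ∀ g : SL2, (g : M2) 0 0 ≠ 0 → F g = 0 := by
    intro g ha
    have hdet : (g : M2) 0 0 * (g : M2) 1 1 - (g : M2) 0 1 * (g : M2) 1 0 = 1 := by
      have := g.2
      rw [Matrix.det_fin_two] at this
      exact this
    have hmat : s6_Lo ((g : M2) 1 0 / (g : M2) 0 0) *
        (s6_D ((g : M2) 0 0) ha * s6_U ((g : M2) 0 1 / (g : M2) 0 0)) = g := by
      apply s6_ext
      show !![1,0;(g : M2) 1 0 / (g : M2) 0 0,1] *
          ((!![(g : M2) 0 0,0;0,((g : M2) 0 0)⁻¹] : M2) *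
            !![1,(g : M2) 0 1 / (g : M2) 0 0;0,1]) = (g : M2)
      rw [s6_ldu _ _ _ _ ha hdet]
      exact (Matrix.eta_fin_two (g : M2)).symm
    rw [← hmat, hFL _ _ (hFLo _), hFL _ _ (hFD _ ha), hFU]
  have hFW : F s6_W = 0 := by
    have hmat : s6_U (-1) * (s6_Lo 1 * s6_U (-1)) = s6_W := by
      apply s6_ext
      exact s6_wdecomp
    rw [← hmat, hFL _ _ (hFU _), hFL _ _ (hFLo _), hFU]
  have hFall : ∀ g : SL2, F g = 0 := by
    intro g
    by_cases ha : (g : M2) 0 0 ≠ 0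
    · exact hFa g ha
    · push_neg at ha
      have hc : (g : M2) 1 0 ≠ 0 := by
        intro hc0
        have := g.2
        rw [Matrix.det_fin_two, ha, hc0] at this
        simp at this
      have hWg : ((s6_W * g : SL2) : M2) 0 0 ≠ 0 := by
        show ((s6_W : M2) * (g : M2)) 0 0 ≠ 0
        rw [Matrix.mul_apply, Fin.sum_univ_two]
        show ((0:ℝ) * (g : M2) 0 0 + (-1) * (g : M2) 1 0) ≠ 0
        simpa using hc
      have hFWinv : F s6_W⁻¹ = 0 := by
        have h1 : F (s6_W⁻¹ * s6_W) = F s6_W⁻¹ := hFR _ _ hFW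
        rw [inv_mul_cancel] at h1
        rw [← h1, hF1]
      have h2 : F (s6_W⁻¹ * (s6_W * g)) = F (s6_W * g) := hFL _ _ hFWinv
      rw [inv_mul_cancel_left] at h2
      rw [h2]
      exact hFa _ hWg
  -- conclusion
  intro g₀
  have h1 := hFall (C⁻¹ * g₀ * C)
  have h2 : C * (C⁻¹ * g₀ * C) * C⁻¹ = g₀ := by group
  rw [hFdef] at h1
  simp only [] at h1
  rw [h2] at h1
  exact (hfzero g₀).mp h1
end

section
/- Let G be a group acting equicontinuously on a uniform space (X, S), and let T be an S-compatible topology on X. Let (α) be a directed preorder, (x_α) a net in X converging to x in the uniform topology T_S, and (g_α) a net in G. Then for every y ∈ X, the net (g_α · x_α) converges to y in the topology T if and only if the net (g_α · x) converges to y in the topology T. -/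
open Filter Topology Uniformity

/-- For an equicontinuous action on `(X, S)` with an `S`-compatible
topology `T`: if a net `x_α → x` in `T_S` and `g_α` is any net in `G`, then
`g_α • x_α → y` in `T` iff `g_α • x → y` in `T`. -/
theorem statement14 {G X : Type*} [Group G] [MulAction G X]
    (U : UniformSpace X) (T : TopologicalSpace X)
    (hcompat : SCompatible U T)
    (hequi : EquicontinuousSMul G U)
    {D : Type*} [Preorder D] [Nonempty D] [IsDirected D (· ≤ ·)]
    (x_ : D → X) (x : X)
    (hx : Filter.Tendsto x_ Filter.atTop (@nhds X U.toTopologicalSpace x))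
    (g_ : D → G) (y : X) :
    Filter.Tendsto (fun α => g_ α • x_ α) Filter.atTop (@nhds X T y) ↔
    Filter.Tendsto (fun α => g_ α • x) Filter.atTop (@nhds X T y) := by
  letI := U
  -- From `x_ → x` in the uniform topology: for any entourage `W`, eventually
  -- `(g • x_ α, g • x) ∈ W` and `(g • x, g • x_ α) ∈ W` for all `g`.
  have hx' : Tendsto (fun α => (x, x_ α)) atTop (𝓤 X) :=
    Uniform.tendsto_nhds_right.mp hx
  have hrel : ∀ W ∈ 𝓤 X, ∀ᶠ α in atTop,
      (∀ g : G, (g • x_ α, g • x) ∈ W) ∧ (∀ g : G, (g • x, g • x_ α) ∈ W) := by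
    intro W hW
    have hWs : SetRel.symmetrize W ∈ 𝓤 X := symmetrize_mem_uniformity hW
    have hWe := hequi _ hWs
    filter_upwards [hx'.eventually (eventually_mem_set.mpr hWe)] with α hα
    exact ⟨fun g => (hα g).2, fun g => (hα g).1⟩
  -- Key step: transfer convergence between the two nets.
  have key : ∀ a b : D → X,
      (∀ W ∈ 𝓤 X, ∀ᶠ α in atTop, ∀ g : G, (g • a α, g • b α) ∈ W) →
      Tendsto (fun α => g_ α • b α) atTop (@nhds X T y) →
      Tendsto (fun α => g_ α • a α) atTop (@nhds X T y) := by
    intro a b hab htend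
    have tn : ∀ f : D → X, Tendsto f atTop (@nhds X T y) ↔
        ∀ s, IsOpen[T] s → y ∈ s → f ⁻¹' s ∈ atTop := fun f => @tendsto_nhds X T D y f atTop
    rw [tn] at htend ⊢
    intro V hV hyV
    obtain ⟨V', hV', hyV', W, hW, hWV⟩ := hcompat V hV y hyV
    filter_upwards [htend V' hV' hyV', hab W hW] with α h1 h2
    exact hWV ⟨g_ α • b α, h1, h2 (g_ α)⟩
  constructor
  · intro h
    exact key (fun _ => x) x_ (fun W hW => (hrel W hW).mono fun α hα => hα.2) h
  · intro h
    exact key x_ (fun _ => x) (fun W hW => (hrel W hW).mono fun α hα => hα.1) h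
end
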